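/- arXiv:0710.0164 — 2 statements merged into one kernel-verified Lean document; each statement's English description precedes it below -/
import Mathlib

section
/- For every nonzero x ∈ ℂ^{n+1}, there is no y ∈ ℂ^{n+1} with m(y) = −m(x); that is, −(x∧Jx) cannot be written in the form y∧Jy for any y. -/
open Complex

/-- The standard hermitian form of signature `(n,1)` on `ℂ^{n+1}`. -/
noncomputable def hForm (n : ℕ) (x y : Fin (n+1) → ℂ) : ℂ :=
  (∑ i : Fin n, x i.castSucc * (starRingEnd ℂ) (y i.castSucc))
    - x (Fin.last n) * (starRingEnd ℂ) (y (Fin.last n))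

/-- The real part `g = Re h`. -/
noncomputable def gForm (n : ℕ) (x y : Fin (n+1) → ℂ) : ℝ := (hForm n x y).re

/-- `m(x) = x ∧ Jx`, i.e. `(x ∧ Jx) z = g(x,z)·Jx − g(Jx,z)·x`. -/
noncomputable def mFun (n : ℕ) (x z : Fin (n+1) → ℂ) : Fin (n+1) → ℂ :=
  gForm n x z • (Complex.I • x) - gForm n (Complex.I • x) z • x

lemma hForm_smul_left (n : ℕ) (c : ℂ) (x z : Fin (n+1) → ℂ) :
    hForm n (c • x) z = c * hForm n x z := by
  simp [hForm, Finset.mul_sum, mul_sub, mul_assoc]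

lemma mFun_eq (n : ℕ) (x z : Fin (n+1) → ℂ) :
    mFun n x z = (Complex.I * (starRingEnd ℂ) (hForm n x z)) • x := by
  funext j
  simp only [mFun, Pi.sub_apply, Pi.smul_apply, hForm_smul_left, gForm, smul_eq_mul]
  set h := hForm n x z
  simp [Complex.ext_iff, Complex.mul_re, Complex.mul_im]
  constructor <;> ring

lemma smul_cancel {n : ℕ} {u v : ℂ} {x : Fin (n+1) → ℂ} (hx : x ≠ 0)
    (h : u • x = v • x) : u = v := by
  obtain ⟨j, hj⟩ := Function.ne_iff.mp hx
  have := congrFun h j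
  simp only [Pi.smul_apply, smul_eq_mul] at this
  exact mul_right_cancel₀ (by simpa using hj) this

/-- for nonzero `x`, the endomorphism `−(x ∧ Jx)` cannot be
written in the form `y ∧ Jy` for any `y`. -/
theorem neg_mFun_not_mFun (n : ℕ) (hn : 1 ≤ n) (x : Fin (n+1) → ℂ)
    (hx : x ≠ 0) :
    ¬ ∃ y : Fin (n+1) → ℂ, ∀ z : Fin (n+1) → ℂ, mFun n y z = - mFun n x z := by
  rintro ⟨y, hy⟩
  simp only [mFun_eq] at hy
  set z₀ : Fin (n+1) → ℂ := Function.update x (Fin.last n) (-(x (Fin.last n))) with hz₀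
  set a := hForm n x z₀ with haa
  have ha : a = (∑ i : Fin (n+1), (Complex.normSq (x i) : ℂ)) := by
    rw [haa, Fin.sum_univ_castSucc]
    simp [hForm, hz₀, Function.update_of_ne (Fin.castSucc_lt_last _).ne,
      Complex.mul_conj]
  have ha0 : a ≠ 0 := by
    rw [ha]
    obtain ⟨j, hj⟩ := Function.ne_iff.mp hx
    have hpos : (0:ℝ) < ∑ i : Fin (n+1), Complex.normSq (x i) :=
      Finset.sum_pos' (fun i _ => Complex.normSq_nonneg _)
        ⟨j, Finset.mem_univ j, Complex.normSq_pos.mpr hj⟩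
    exact_mod_cast hpos.ne'
  have hIa : Complex.I * (starRingEnd ℂ) a ≠ 0 :=
    mul_ne_zero Complex.I_ne_zero ((map_ne_zero (starRingEnd ℂ)).mpr ha0)
  set b := hForm n y z₀ with hb
  have key := hy z₀
  rw [← hb, ← haa, ← neg_smul] at key
  have hb0 : Complex.I * (starRingEnd ℂ) b ≠ 0 := by
    intro h0
    have h1 : (0:ℂ) • x = (-(Complex.I * (starRingEnd ℂ) a)) • x := by
      rw [zero_smul, ← key, h0, zero_smul]
    exact hIa (neg_eq_zero.mp (smul_cancel hx h1).symm)
  set c : ℂ := (Complex.I * (starRingEnd ℂ) b)⁻¹ * (-(Complex.I * (starRingEnd ℂ) a)) with hc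
  have hyx : y = c • x := by
    rw [hc, mul_smul, ← key, smul_smul, inv_mul_cancel₀ hb0, one_smul]
  have hbca : b = c * a := by rw [hb, hyx, hForm_smul_left, ← haa]
  rw [hbca, hyx, smul_smul] at key
  have key2 := smul_cancel hx key
  rw [map_mul] at key2
  have h3 : ((starRingEnd ℂ) c * c + 1) * (Complex.I * (starRingEnd ℂ) a) = 0 := by
    linear_combination key2
  have h4 : (starRingEnd ℂ) c * c = -1 := by
    rcases mul_eq_zero.mp h3 with h | h
    · exact eq_neg_of_add_eq_zero_left h
    · exact absurd h hIa
  have h5 : (Complex.normSq c : ℂ) = -1 := by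
    rw [← h4, Complex.normSq_eq_conj_mul_self]
  have h6 : Complex.normSq c = -1 := by exact_mod_cast h5
  linarith [Complex.normSq_nonneg c]
end

section
/- Suppose x₀ ∈ ℂ^{n} satisfies g(x₀,x₀) = 1 and that ρ satisfies the identity ρ = g(x₀, ρJx₀)·J − (x₀ ∧ ρx₀) − (Jx₀ ∧ ρJx₀) as ℝ-linear endomorphisms of ℂ^{n}. Then ρx₀ = g(x₀, ρJx₀)·Jx₀, and moreover ρx₀ = 0. -/
open Complex

/-- The standard positive definite hermitian inner product on `ℂ^n`
(`ℂ`-linear in the first argument). -/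
noncomputable def innerC (n : ℕ) (x y : Fin n → ℂ) : ℂ :=
  ∑ i : Fin n, x i * (starRingEnd ℂ) (y i)

/-- Its real part `g = Re⟪·,·⟫`. -/
noncomputable def gR (n : ℕ) (x y : Fin n → ℂ) : ℝ := (innerC n x y).re


lemma innerC_conj (n : ℕ) (x y : Fin n → ℂ) :
    innerC n y x = (starRingEnd ℂ) (innerC n x y) := by
  simp [innerC, map_sum, mul_comm]

lemma gR_symm (n : ℕ) (x y : Fin n → ℂ) : gR n x y = gR n y x := by
  rw [gR, gR, innerC_conj]; simp

lemma innerC_I_left (n : ℕ) (x y : Fin n → ℂ) :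
    innerC n (Complex.I • x) y = Complex.I * innerC n x y := by
  simp [innerC, Finset.mul_sum, mul_assoc]

lemma innerC_I_right (n : ℕ) (x y : Fin n → ℂ) :
    innerC n x (Complex.I • y) = -Complex.I * innerC n x y := by
  rw [innerC, innerC, Finset.mul_sum]
  refine Finset.sum_congr rfl fun i _ => ?_
  simp [Complex.conj_I]; ring

lemma innerC_self_im (n : ℕ) (x : Fin n → ℂ) : (innerC n x x).im = 0 := by
  simp [innerC, Complex.im_sum, Complex.mul_conj]

lemma gR_I_self (n : ℕ) (x : Fin n → ℂ) : gR n (Complex.I • x) x = 0 := by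
  rw [gR, innerC_I_left]
  simp [Complex.mul_re, innerC_self_im]

lemma gR_I_I (n : ℕ) (x y : Fin n → ℂ) :
    gR n (Complex.I • x) (Complex.I • y) = gR n x y := by
  rw [gR, innerC_I_left, innerC_I_right]
  simp [gR]

lemma gR_smul_left (n : ℕ) (r : ℝ) (x y : Fin n → ℂ) :
    gR n (r • x) y = r * gR n x y := by
  rw [gR, gR, innerC, innerC, Complex.re_sum, Complex.re_sum, Finset.mul_sum]
  refine Finset.sum_congr rfl fun i _ => ?_
  simp [Complex.mul_re]
  ring

lemma gR_zero_right (n : ℕ) (x : Fin n → ℂ) : gR n x 0 = 0 := by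
  simp [gR, innerC]

/-- The wedge `(u ∧ v) Z = g(u,Z)·v − g(v,Z)·u`. -/
noncomputable def wedgeR (n : ℕ) (u v Z : Fin n → ℂ) : Fin n → ℂ :=
  gR n u Z • v - gR n v Z • u

/-- if a skew-hermitian `ρ ∈ u(n)` satisfies
`ρ = g(x₀,ρJx₀)·J − (x₀ ∧ ρx₀) − (Jx₀ ∧ ρJx₀)` for a unit vector `x₀`, then
`ρx₀ = g(x₀,ρJx₀)·Jx₀`, and moreover `ρx₀ = 0`. -/
theorem rho_x0_eq_zero (n : ℕ) (hn : 1 ≤ n)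
    (ρ : (Fin n → ℂ) →ₗ[ℂ] (Fin n → ℂ))
    (hρ : ∀ x y : Fin n → ℂ, innerC n (ρ x) y + innerC n x (ρ y) = 0)
    (x₀ : Fin n → ℂ) (hx₀ : gR n x₀ x₀ = 1)
    (hid : ∀ Z : Fin n → ℂ,
      ρ Z = gR n x₀ (ρ (Complex.I • x₀)) • (Complex.I • Z)
        - wedgeR n x₀ (ρ x₀) Z
        - wedgeR n (Complex.I • x₀) (ρ (Complex.I • x₀)) Z) :
    ρ x₀ = gR n x₀ (ρ (Complex.I • x₀)) • (Complex.I • x₀) ∧ ρ x₀ = 0 := by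
  set c := gR n x₀ (ρ (Complex.I • x₀)) with hc_def
  have hskew : ∀ x : Fin n → ℂ, gR n (ρ x) x = 0 := by
    intro x
    have h := hρ x x
    rw [innerC_conj n (ρ x) x] at h
    have := congrArg Complex.re h
    simp [gR] at this ⊢
    linarith [this]
  have f4 : gR n (ρ (Complex.I • x₀)) x₀ = c := gR_symm n _ _
  have E1 := hid x₀
  rw [wedgeR, wedgeR, hx₀, hskew x₀, gR_I_self, f4, one_smul, zero_smul,
    zero_smul, sub_zero, zero_sub, sub_neg_eq_add] at E1
  have h1 : ρ x₀ = c • (Complex.I • x₀) := by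
    linear_combination (norm := module) (2⁻¹ : ℝ) • E1
  have hII : Complex.I • (Complex.I • x₀) = -x₀ := by
    rw [smul_smul, Complex.I_mul_I]; simp
  have g1 : gR n x₀ (Complex.I • x₀) = 0 := by rw [gR_symm]; exact gR_I_self n x₀
  have g2 : gR n (ρ x₀) (Complex.I • x₀) = c := by
    rw [h1, gR_smul_left, gR_I_I, hx₀, mul_one]
  have g3 : gR n (Complex.I • x₀) (Complex.I • x₀) = 1 := by rw [gR_I_I, hx₀]
  have E2 := hid (Complex.I • x₀)
  rw [wedgeR, wedgeR, g1, g2, g3, hskew (Complex.I • x₀), hII, one_smul,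
    zero_smul, zero_smul, zero_sub, sub_zero, sub_neg_eq_add] at E2
  have hJ : ρ (Complex.I • x₀) = 0 := by
    linear_combination (norm := module) (2⁻¹ : ℝ) • E2
  have hc : c = 0 := by rw [hc_def, hJ, gR_zero_right]
  refine ⟨h1, ?_⟩
  rw [h1, hc, zero_smul]
end
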